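/- Let (X₁,Y₁) and (X₂,Y₂) be random vectors taking values in the unit square [0,1]×[0,1], with cdfs F₁ and F₂, marginal cdfs Fᵢ^X(x) = Fᵢ(x,1) and Fᵢ^Y(y) = Fᵢ(1,y), and associated functions Kᵢ(s,t) = Fᵢ^X(s) + Fᵢ^Y(t) − Fᵢ(s,t) for i = 1,2. If K₁(s,t) ≤ K₂(s,t), F₁^X(s) ≤ F₂^X(s), and F₁^Y(t) ≤ F₂^Y(t) for all (s,t) ∈ [0,1]×[0,1], then for every function φ : ℝ² → ℝ which is C² on an open connected set Ω containing [0,1]×[0,1], increasing (nondecreasing) in each of its arguments, and supermodular (∂²φ/∂x∂y ≥ 0 on Ω), one has E[φ(X₁,Y₁)] ≥ E[φ(X₂,Y₂)]. -/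

import Mathlib

open Set MeasureTheory

set_option linter.unusedSectionVars false

namespace SDaux

noncomputable def cl (a : ℝ) : ℝ := max 0 (min 1 a)

lemma cl_mem (a : ℝ) : cl a ∈ Icc (0:ℝ) 1 :=
  ⟨le_max_left _ _, max_le (by norm_num) (min_le_left _ _)⟩

lemma cl_eq {a : ℝ} (h : a ∈ Icc (0:ℝ) 1) : cl a = a := by
  simp [cl, max_eq_right, min_eq_right, h.1, h.2]

lemma continuous_cl : Continuous cl :=
  continuous_const.max (continuous_const.min continuous_id)

lemma measurable_cl : Measurable cl := continuous_cl.measurable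

lemma mono_hasDerivAt_nonneg {f : ℝ → ℝ} (hf : Monotone f) {d x : ℝ}
    (h : HasDerivAt f d x) : 0 ≤ d := by
  have h' := (h.hasDerivWithinAt (s := Ioi x))
  rw [hasDerivWithinAt_iff_tendsto_slope' (notMem_Ioi_self)] at h'
  refine ge_of_tendsto h' ?_
  filter_upwards [self_mem_nhdsWithin] with y hy
  have hxy : x < y := hy
  have h0 : 0 ≤ f y - f x := sub_nonneg.2 (hf hxy.le)
  have hpos : 0 < y - x := by linarith
  simp only [slope_def_field]
  exact div_nonneg h0 hpos.le


noncomputable def D1 (φ : ℝ → ℝ → ℝ) (q : ℝ × ℝ) : ℝ :=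
  fderiv ℝ (fun q : ℝ × ℝ => φ q.1 q.2) q (1, 0)

noncomputable def D2 (φ : ℝ → ℝ → ℝ) (q : ℝ × ℝ) : ℝ :=
  fderiv ℝ (fun q : ℝ × ℝ => φ q.1 q.2) q (0, 1)

noncomputable def HH (φ : ℝ → ℝ → ℝ) (q : ℝ × ℝ) : ℝ :=
  fderiv ℝ (D2 φ) q (1, 0)

section smooth

variable {φ : ℝ → ℝ → ℝ} {U : Set (ℝ × ℝ)} (hUo : IsOpen U)
  (hC : ContDiffOn ℝ 2 (fun q : ℝ × ℝ => φ q.1 q.2) U)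

lemma measurable_D1 : Measurable (D1 φ) := measurable_fderiv_apply_const ℝ _ _
lemma measurable_D2 : Measurable (D2 φ) := measurable_fderiv_apply_const ℝ _ _
lemma measurable_HH : Measurable (HH φ) := measurable_fderiv_apply_const ℝ _ _

include hUo hC

lemma diffAt_Phi {q : ℝ × ℝ} (hq : q ∈ U) :
    DifferentiableAt ℝ (fun q : ℝ × ℝ => φ q.1 q.2) q :=
  (hC.contDiffAt (hUo.mem_nhds hq)).differentiableAt two_ne_zero

lemma hasDerivAt_D1 {q : ℝ × ℝ} (hq : q ∈ U) :
    HasDerivAt (fun x => φ x q.2) (D1 φ q) q.1 := by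
  have hΦ := (diffAt_Phi hUo hC hq).hasFDerivAt
  have hline : HasDerivAt (fun x : ℝ => (x, q.2)) ((1:ℝ), (0:ℝ)) q.1 := by
    simpa using ((hasDerivAt_id q.1).prodMk (hasDerivAt_const q.1 q.2))
  simpa [D1, Function.comp_def] using (hΦ.comp_hasDerivAt q.1 hline)

lemma hasDerivAt_D2 {q : ℝ × ℝ} (hq : q ∈ U) :
    HasDerivAt (fun y => φ q.1 y) (D2 φ q) q.2 := by
  have hΦ := (diffAt_Phi hUo hC hq).hasFDerivAt
  have hline : HasDerivAt (fun y : ℝ => (q.1, y)) ((0:ℝ), (1:ℝ)) q.2 := by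
    simpa using ((hasDerivAt_const q.2 q.1).prodMk (hasDerivAt_id q.2))
  simpa [D2, Function.comp_def] using (hΦ.comp_hasDerivAt q.2 hline)

lemma contDiffOn_D2 : ContDiffOn ℝ 1 (D2 φ) U := by
  have h1 : ContDiffOn ℝ 1 (fun q => fderiv ℝ (fun q : ℝ × ℝ => φ q.1 q.2) q) U :=
    hC.fderiv_of_isOpen hUo (by norm_num)
  exact h1.clm_apply contDiffOn_const

lemma continuousOn_D1 : ContinuousOn (D1 φ) U := by
  have h1 : ContinuousOn (fun q => fderiv ℝ (fun q : ℝ × ℝ => φ q.1 q.2) q) U :=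
    hC.continuousOn_fderiv_of_isOpen hUo (by norm_num)
  exact h1.clm_apply continuousOn_const

lemma continuousOn_D2 : ContinuousOn (D2 φ) U := by
  have h1 : ContinuousOn (fun q => fderiv ℝ (fun q : ℝ × ℝ => φ q.1 q.2) q) U :=
    hC.continuousOn_fderiv_of_isOpen hUo (by norm_num)
  exact h1.clm_apply continuousOn_const

lemma hasDerivAt_HH {q : ℝ × ℝ} (hq : q ∈ U) :
    HasDerivAt (fun x => D2 φ (x, q.2)) (HH φ q) q.1 := by
  have hD2 : DifferentiableAt ℝ (D2 φ) q :=
    ((contDiffOn_D2 hUo hC).contDiffAt (hUo.mem_nhds hq)).differentiableAt one_ne_zero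
  have hΦ := hD2.hasFDerivAt
  have hline : HasDerivAt (fun x : ℝ => (x, q.2)) ((1:ℝ), (0:ℝ)) q.1 := by
    simpa using ((hasDerivAt_id q.1).prodMk (hasDerivAt_const q.1 q.2))
  simpa [HH, Function.comp_def] using (hΦ.comp_hasDerivAt q.1 hline)

lemma continuousOn_HH : ContinuousOn (HH φ) U := by
  have h1 : ContinuousOn (fun q => fderiv ℝ (D2 φ) q) U :=
    (contDiffOn_D2 hUo hC).continuousOn_fderiv_of_isOpen hUo le_rfl
  exact h1.clm_apply continuousOn_const

/-- On `U`, `HH` agrees with the iterated `deriv` from the supermodularity hypothesis. -/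
lemma HH_eq_deriv {q : ℝ × ℝ} (hq : q ∈ U) :
    HH φ q = deriv (fun x => deriv (fun y => φ x y) q.2) q.1 := by
  have hmem : ∀ᶠ x in nhds q.1, (x, q.2) ∈ U := by
    have : Continuous (fun x : ℝ => (x, q.2)) := continuous_id.prodMk continuous_const
    exact this.continuousAt.preimage_mem_nhds (hUo.mem_nhds hq)
  have heq : (fun x => deriv (fun y => φ x y) q.2) =ᶠ[nhds q.1]
      (fun x => D2 φ (x, q.2)) := by
    filter_upwards [hmem] with x hx
    simpa using ((hasDerivAt_D2 hUo hC hx).deriv)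
  rw [heq.deriv_eq]
  exact ((hasDerivAt_HH hUo hC hq).deriv).symm


variable (hUs : Icc (0:ℝ) 1 ×ˢ Icc (0:ℝ) 1 ⊆ U)

include hUs

omit hUo hC in
lemma mem_U {s t : ℝ} (hs : s ∈ Icc (0:ℝ) 1) (ht : t ∈ Icc (0:ℝ) 1) :
    ((s, t) : ℝ × ℝ) ∈ U := hUs (mk_mem_prod hs ht)

omit hUo hC

lemma contOn_line1 {f : ℝ × ℝ → ℝ} (hf : ContinuousOn f U) {t a b : ℝ}
    (ht : t ∈ Icc (0:ℝ) 1) (ha : a ∈ Icc (0:ℝ) 1) (hb : b ∈ Icc (0:ℝ) 1) :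
    ContinuousOn (fun s => f (s, t)) (uIcc a b) := by
  apply hf.comp (Continuous.continuousOn (by continuity))
  intro s hs
  exact mem_U hUs (uIcc_subset_Icc ha hb hs) ht

lemma contOn_line2 {f : ℝ × ℝ → ℝ} (hf : ContinuousOn f U) {x a b : ℝ}
    (hx : x ∈ Icc (0:ℝ) 1) (ha : a ∈ Icc (0:ℝ) 1) (hb : b ∈ Icc (0:ℝ) 1) :
    ContinuousOn (fun t => f (x, t)) (uIcc a b) := by
  apply hf.comp (Continuous.continuousOn (by continuity))
  intro s hs
  exact mem_U hUs hx (uIcc_subset_Icc ha hb hs)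

include hUo hC

lemma ftcX {t a b : ℝ} (ht : t ∈ Icc (0:ℝ) 1) (ha : a ∈ Icc (0:ℝ) 1)
    (hb : b ∈ Icc (0:ℝ) 1) :
    ∫ s in a..b, D1 φ (s, t) = φ b t - φ a t := by
  apply intervalIntegral.integral_eq_sub_of_hasDerivAt
  · intro s hs
    exact hasDerivAt_D1 hUo hC (mem_U hUs (uIcc_subset_Icc ha hb hs) ht)
  · exact (contOn_line1 hUs (continuousOn_D1 hUo hC) ht ha hb).intervalIntegrable

lemma ftcY {x a b : ℝ} (hx : x ∈ Icc (0:ℝ) 1) (ha : a ∈ Icc (0:ℝ) 1)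
    (hb : b ∈ Icc (0:ℝ) 1) :
    ∫ t in a..b, D2 φ (x, t) = φ x b - φ x a := by
  apply intervalIntegral.integral_eq_sub_of_hasDerivAt
  · intro t htm
    exact hasDerivAt_D2 hUo hC (mem_U hUs hx (uIcc_subset_Icc ha hb htm))
  · exact (contOn_line2 hUs (continuousOn_D2 hUo hC) hx ha hb).intervalIntegrable

lemma ftcH {t a b : ℝ} (ht : t ∈ Icc (0:ℝ) 1) (ha : a ∈ Icc (0:ℝ) 1)
    (hb : b ∈ Icc (0:ℝ) 1) :
    ∫ s in a..b, HH φ (s, t) = D2 φ (b, t) - D2 φ (a, t) := by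
  apply intervalIntegral.integral_eq_sub_of_hasDerivAt
  · intro s hs
    exact hasDerivAt_HH hUo hC (mem_U hUs (uIcc_subset_Icc ha hb hs) ht)
  · exact (contOn_line1 hUs (continuousOn_HH hUo hC) ht ha hb).intervalIntegrable

end smooth


/-! ### Measure-theoretic helpers -/

noncomputable def pm : Measure ℝ := volume.restrict (Icc 0 1)

instance : IsFiniteMeasure pm := by
  constructor
  rw [pm, Measure.restrict_apply_univ]
  simp [Real.volume_Icc]

lemma integrable_of_bound {β : Type*} [MeasurableSpace β] {μ : Measure β}
    [IsFiniteMeasure μ] {f : β → ℝ} (hm : AEStronglyMeasurable f μ) (C : ℝ)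
    (h : ∀ x, |f x| ≤ C) : Integrable f μ :=
  ⟨hm, HasFiniteIntegral.of_bounded (C := C)
    (ae_of_all _ (fun x => by simpa [Real.norm_eq_abs] using h x))⟩

/-- Integral over `pm` of a right-tail indicator. -/
lemma ind_int (f : ℝ → ℝ) {x : ℝ} (hx : x ∈ Icc (0:ℝ) 1) :
    ∫ s, (if x ≤ s then f s else 0) ∂pm = ∫ s in x..(1:ℝ), f s := by
  have h1 : (fun s => if x ≤ s then f s else 0) = (Ici x).indicator f := by
    funext s; by_cases h : x ≤ s <;> simp [Set.indicator, h, mem_Ici]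
  rw [h1, pm, integral_indicator measurableSet_Ici,
    Measure.restrict_restrict measurableSet_Ici]
  have h2 : Ici x ∩ Icc (0:ℝ) 1 = Icc x 1 := by
    ext s
    simp only [mem_inter_iff, mem_Ici, mem_Icc]
    constructor
    · rintro ⟨h, _, h2⟩; exact ⟨h, h2⟩
    · rintro ⟨h, h2⟩; exact ⟨h, le_trans hx.1 h, h2⟩
  rw [h2, integral_Icc_eq_integral_Ioc, ← intervalIntegral.integral_of_le hx.2]

lemma pm_int (f : ℝ → ℝ) : ∫ s, f s ∂pm = ∫ s in (0:ℝ)..1, f s := by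
  rw [pm, intervalIntegral.integral_of_le (by norm_num : (0:ℝ) ≤ 1),
    integral_Icc_eq_integral_Ioc]


lemma zmem : (0:ℝ) ∈ Icc (0:ℝ) 1 := by norm_num
lemma omem : (1:ℝ) ∈ Icc (0:ℝ) 1 := by norm_num

section repr

variable {φ : ℝ → ℝ → ℝ} {U : Set (ℝ × ℝ)} (hUo : IsOpen U)
  (hC : ContDiffOn ℝ 2 (fun q : ℝ × ℝ => φ q.1 q.2) U)
  (hUs : Icc (0:ℝ) 1 ×ˢ Icc (0:ℝ) 1 ⊆ U)

include hUo hC hUs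

lemma I1 {x : ℝ} (hx : x ∈ Icc (0:ℝ) 1) :
    ∫ s, (if x ≤ s then D1 φ (cl s, 0) else 0) ∂pm = φ 1 0 - φ x 0 := by
  rw [ind_int _ hx]
  have h : ∫ s in x..(1:ℝ), D1 φ (cl s, 0) = ∫ s in x..(1:ℝ), D1 φ (s, 0) := by
    apply intervalIntegral.integral_congr
    intro s hs
    simp only [cl_eq (uIcc_subset_Icc hx omem hs)]
  rw [h, ftcX hUo hC hUs zmem hx omem]

lemma I2 {y : ℝ} (hy : y ∈ Icc (0:ℝ) 1) :
    ∫ t, (if y ≤ t then D2 φ (0, cl t) else 0) ∂pm = φ 0 1 - φ 0 y := by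
  rw [ind_int _ hy]
  have h : ∫ t in y..(1:ℝ), D2 φ (0, cl t) = ∫ t in y..(1:ℝ), D2 φ (0, t) := by
    apply intervalIntegral.integral_congr
    intro t ht
    simp only [cl_eq (uIcc_subset_Icc hy omem ht)]
  rw [h, ftcY hUo hC hUs zmem hy omem]


omit hUo hC in
lemma bound_sq {f : ℝ × ℝ → ℝ} (hf : ContinuousOn f U) :
    ∃ C, ∀ p ∈ Icc (0:ℝ) 1 ×ˢ Icc (0:ℝ) 1, |f p| ≤ C := by
  obtain ⟨C, hC⟩ :=
    (isCompact_Icc.prod isCompact_Icc).exists_bound_of_continuousOn (hf.mono hUs)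
  exact ⟨C, fun p hp => by simpa [Real.norm_eq_abs] using hC p hp⟩

lemma int3_integrable (x y : ℝ) :
    Integrable
      (fun q : ℝ × ℝ => if x ≤ q.2 ∨ y ≤ q.1 then HH φ (cl q.2, cl q.1) else 0)
      (pm.prod pm) := by
  obtain ⟨C, hC⟩ := bound_sq hUs (continuousOn_HH hUo hC)
  refine integrable_of_bound ?_ (max C 0) ?_
  · apply Measurable.aestronglyMeasurable
    refine Measurable.ite ?_ ?_ measurable_const
    · exact (measurableSet_le measurable_const measurable_snd).union
        (measurableSet_le measurable_const measurable_fst)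
    · exact measurable_HH.comp
        ((measurable_cl.comp measurable_snd).prodMk (measurable_cl.comp measurable_fst))
  · intro q
    by_cases h : x ≤ q.2 ∨ y ≤ q.1
    · simp only [h, if_true]
      exact le_max_of_le_left (hC _ (mk_mem_prod (cl_mem _) (cl_mem _)))
    · simp only [h, if_false, abs_zero]
      exact le_max_right _ _

lemma I3 {x y : ℝ} (hx : x ∈ Icc (0:ℝ) 1) (hy : y ∈ Icc (0:ℝ) 1) :
    ∫ q, (if x ≤ q.2 ∨ y ≤ q.1 then HH φ (cl q.2, cl q.1) else 0) ∂(pm.prod pm)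
      = φ 1 1 - φ x y + φ x 0 - φ 1 0 - φ 0 1 + φ 0 y := by
  rw [MeasureTheory.integral_prod _ (int3_integrable hUo hC hUs x y)]
  have hae : ∀ᵐ t ∂pm, t ∈ Icc (0:ℝ) 1 := by
    rw [pm]; exact ae_restrict_mem measurableSet_Icc
  set G : ℝ → ℝ :=
    fun t => D2 φ (1, cl t) - (if y ≤ t then D2 φ (0, cl t) else D2 φ (x, cl t)) with hG
  have hinner : ∀ t ∈ Icc (0:ℝ) 1,
      (∫ s, (if x ≤ s ∨ y ≤ t then HH φ (cl s, cl t) else 0) ∂pm) = G t := by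
    intro t ht
    have hclt : cl t = t := cl_eq ht
    by_cases hyt : y ≤ t
    · simp only [hG, hyt, or_true, if_true, hclt]
      rw [pm_int]
      have h2 : ∫ s in (0:ℝ)..1, HH φ (cl s, t) = ∫ s in (0:ℝ)..1, HH φ (s, t) :=
        intervalIntegral.integral_congr (fun s hs => by
          simp only [cl_eq (uIcc_subset_Icc zmem omem hs)])
      rw [h2, ftcH hUo hC hUs ht zmem omem]
    · simp only [hG, hyt, or_false, if_false, hclt]
      rw [ind_int _ hx]
      have h2 : ∫ s in x..(1:ℝ), HH φ (cl s, t) = ∫ s in x..(1:ℝ), HH φ (s, t) :=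
        intervalIntegral.integral_congr (fun s hs => by
          simp only [cl_eq (uIcc_subset_Icc hx omem hs)])
      rw [h2, ftcH hUo hC hUs ht hx omem]
  rw [integral_congr_ae (hae.mono fun t ht => hinner t ht)]
  -- integrability of `G` on pieces
  obtain ⟨C2, hC2⟩ := bound_sq hUs (continuousOn_D2 hUo hC)
  have hGmeas : Measurable G := by
    apply Measurable.sub
    · exact measurable_D2.comp (measurable_const.prodMk measurable_cl)
    · refine Measurable.ite (measurableSet_le measurable_const measurable_id) ?_ ?_
      · exact measurable_D2.comp (measurable_const.prodMk measurable_cl)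
      · exact measurable_D2.comp (measurable_const.prodMk measurable_cl)
  have hGbd : ∀ t, |G t| ≤ C2 + C2 := by
    intro t
    have h1 : |D2 φ (1, cl t)| ≤ C2 := hC2 _ (mk_mem_prod omem (cl_mem t))
    have h2 : |(if y ≤ t then D2 φ (0, cl t) else D2 φ (x, cl t))| ≤ C2 := by
      by_cases h : y ≤ t
      · simp only [h, if_true]; exact hC2 _ (mk_mem_prod zmem (cl_mem t))
      · simp only [h, if_false]; exact hC2 _ (mk_mem_prod hx (cl_mem t))
    calc |G t| ≤ |D2 φ (1, cl t)| + |(if y ≤ t then D2 φ (0, cl t) else D2 φ (x, cl t))| :=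
          abs_sub _ _
    _ ≤ C2 + C2 := add_le_add h1 h2
  have hGpm : Integrable G pm :=
    integrable_of_bound hGmeas.aestronglyMeasurable (C2 + C2) hGbd
  have hGon : IntegrableOn G (Icc (0:ℝ) 1) volume := hGpm
  have hsplit : ∫ t, G t ∂pm = (∫ t in Icc (0:ℝ) y, G t) + ∫ t in Ioc y (1:ℝ), G t := by
    rw [show pm = volume.restrict (Icc (0:ℝ) 1) from rfl,
      ← Icc_union_Ioc_eq_Icc hy.1 hy.2]
    apply setIntegral_union
    · exact Set.disjoint_left.2 fun z hz1 hz2 => absurd hz1.2 (not_le.2 hz2.1)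
    · exact measurableSet_Ioc
    · exact hGon.mono_set (Icc_subset_Icc_right hy.2)
    · exact hGon.mono_set (Ioc_subset_Icc_self.trans (Icc_subset_Icc_left hy.1))
  rw [hsplit]
  have hP1 : ∫ t in Icc (0:ℝ) y, G t = (φ 1 y - φ 1 0) - (φ x y - φ x 0) := by
    have hne : ∀ᵐ (t : ℝ) ∂volume, t ≠ y := by
      refine ae_iff.2 ?_
      simp only [not_not]
      simp [show {t : ℝ | t = y} = {y} from rfl]
    have hcg : ∫ t in Icc (0:ℝ) y, G t
        = ∫ t in Icc (0:ℝ) y, (D2 φ (1, t) - D2 φ (x, t)) := by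
      apply setIntegral_congr_ae measurableSet_Icc
      filter_upwards [hne] with t hty ht
      have htI : t ∈ Icc (0:ℝ) 1 := ⟨ht.1, le_trans ht.2 hy.2⟩
      have hlt : ¬ y ≤ t := not_le.2 (lt_of_le_of_ne ht.2 hty)
      simp only [hG, cl_eq htI, hlt, if_false]
    rw [hcg, integral_Icc_eq_integral_Ioc, ← intervalIntegral.integral_of_le hy.1,
        intervalIntegral.integral_sub
          (contOn_line2 hUs (continuousOn_D2 hUo hC) omem zmem hy).intervalIntegrable
          (contOn_line2 hUs (continuousOn_D2 hUo hC) hx zmem hy).intervalIntegrable,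
        ftcY hUo hC hUs omem zmem hy, ftcY hUo hC hUs hx zmem hy]
  have hP2 : ∫ t in Ioc y (1:ℝ), G t = (φ 1 1 - φ 1 y) - (φ 0 1 - φ 0 y) := by
    have hcg : ∫ t in Ioc y (1:ℝ), G t
        = ∫ t in Ioc y (1:ℝ), (D2 φ (1, t) - D2 φ (0, t)) := by
      apply setIntegral_congr_fun measurableSet_Ioc
      intro t ht
      have htI : t ∈ Icc (0:ℝ) 1 := ⟨le_trans hy.1 ht.1.le, ht.2⟩
      have hyt : y ≤ t := ht.1.le
      simp only [hG, cl_eq htI, hyt, if_true]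
    rw [hcg, ← intervalIntegral.integral_of_le hy.2,
        intervalIntegral.integral_sub
          (contOn_line2 hUs (continuousOn_D2 hUo hC) omem hy omem).intervalIntegrable
          (contOn_line2 hUs (continuousOn_D2 hUo hC) zmem hy omem).intervalIntegrable,
        ftcY hUo hC hUs omem hy omem, ftcY hUo hC hUs zmem hy omem]
  rw [hP1, hP2]
  ring


variable {α : Type*} [MeasurableSpace α] (ℙ : Measure α) [IsProbabilityMeasure ℙ]
  (X : α → ℝ × ℝ) (hX : Measurable X)
  (hXr : ∀ ω, X ω ∈ Icc (0:ℝ) 1 ×ˢ Icc (0:ℝ) 1)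

include hX

lemma swap1_integrable :
    Integrable (Function.uncurry fun ω s =>
      if (X ω).1 ≤ s then D1 φ (cl s, 0) else 0) (ℙ.prod pm) := by
  obtain ⟨C, hC⟩ := bound_sq hUs (continuousOn_D1 hUo hC)
  refine integrable_of_bound ?_ (max C 0) ?_
  · apply Measurable.aestronglyMeasurable
    refine Measurable.ite ?_ ?_ measurable_const
    · exact measurableSet_le ((hX.comp measurable_fst).fst) measurable_snd
    · exact measurable_D1.comp
        ((measurable_cl.comp measurable_snd).prodMk measurable_const)
  · rintro ⟨ω, s⟩
    simp only [Function.uncurry]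
    by_cases h : (X ω).1 ≤ s
    · simp only [h, if_true]
      exact le_max_of_le_left (hC _ (mk_mem_prod (cl_mem _) zmem))
    · simp only [h, if_false, abs_zero]
      exact le_max_right _ _

lemma swap2_integrable :
    Integrable (Function.uncurry fun ω t =>
      if (X ω).2 ≤ t then D2 φ (0, cl t) else 0) (ℙ.prod pm) := by
  obtain ⟨C, hC⟩ := bound_sq hUs (continuousOn_D2 hUo hC)
  refine integrable_of_bound ?_ (max C 0) ?_
  · apply Measurable.aestronglyMeasurable
    refine Measurable.ite ?_ ?_ measurable_const
    · exact measurableSet_le ((hX.comp measurable_fst).snd) measurable_snd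
    · exact measurable_D2.comp
        (measurable_const.prodMk (measurable_cl.comp measurable_snd))
  · rintro ⟨ω, t⟩
    simp only [Function.uncurry]
    by_cases h : (X ω).2 ≤ t
    · simp only [h, if_true]
      exact le_max_of_le_left (hC _ (mk_mem_prod zmem (cl_mem _)))
    · simp only [h, if_false, abs_zero]
      exact le_max_right _ _

lemma swap3_integrable :
    Integrable (Function.uncurry fun ω (q : ℝ × ℝ) =>
      if (X ω).1 ≤ q.2 ∨ (X ω).2 ≤ q.1 then HH φ (cl q.2, cl q.1) else 0)
      (ℙ.prod (pm.prod pm)) := by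
  obtain ⟨C, hC⟩ := bound_sq hUs (continuousOn_HH hUo hC)
  refine integrable_of_bound ?_ (max C 0) ?_
  · apply Measurable.aestronglyMeasurable
    refine Measurable.ite ?_ ?_ measurable_const
    · refine MeasurableSet.union ?_ ?_
      · exact measurableSet_le ((hX.comp measurable_fst).fst)
          (measurable_snd.snd)
      · exact measurableSet_le ((hX.comp measurable_fst).snd)
          (measurable_snd.fst)
    · exact measurable_HH.comp
        (((measurable_cl.comp measurable_snd.snd)).prodMk
          ((measurable_cl.comp measurable_snd.fst)))
  · rintro ⟨ω, q⟩
    simp only [Function.uncurry]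
    by_cases h : (X ω).1 ≤ q.2 ∨ (X ω).2 ≤ q.1
    · simp only [h, if_true]
      exact le_max_of_le_left (hC _ (mk_mem_prod (cl_mem _) (cl_mem _)))
    · simp only [h, if_false, abs_zero]
      exact le_max_right _ _

omit hUo hC hUs in
lemma inner1 (s : ℝ) :
    ∫ ω, (if (X ω).1 ≤ s then D1 φ (cl s, 0) else 0) ∂ℙ
      = D1 φ (cl s, 0) * (ℙ {ω | (X ω).1 ≤ s}).toReal := by
  have h : (fun ω => if (X ω).1 ≤ s then D1 φ (cl s, 0) else 0)
      = ({ω | (X ω).1 ≤ s}).indicator (fun _ => D1 φ (cl s, 0)) := by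
    funext ω
    by_cases h : (X ω).1 ≤ s <;> simp [Set.indicator, h]
  rw [h, integral_indicator_const _ (measurableSet_le hX.fst measurable_const)]
  simp [mul_comm, measureReal_def]

omit hUo hC hUs in
lemma inner2 (t : ℝ) :
    ∫ ω, (if (X ω).2 ≤ t then D2 φ (0, cl t) else 0) ∂ℙ
      = D2 φ (0, cl t) * (ℙ {ω | (X ω).2 ≤ t}).toReal := by
  have h : (fun ω => if (X ω).2 ≤ t then D2 φ (0, cl t) else 0)
      = ({ω | (X ω).2 ≤ t}).indicator (fun _ => D2 φ (0, cl t)) := by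
    funext ω
    by_cases h : (X ω).2 ≤ t <;> simp [Set.indicator, h]
  rw [h, integral_indicator_const _ (measurableSet_le hX.snd measurable_const)]
  simp [mul_comm, measureReal_def]

omit hUo hC hUs in
lemma inner3 (q : ℝ × ℝ) :
    ∫ ω, (if (X ω).1 ≤ q.2 ∨ (X ω).2 ≤ q.1 then HH φ (cl q.2, cl q.1) else 0) ∂ℙ
      = HH φ (cl q.2, cl q.1)
        * (ℙ {ω | (X ω).1 ≤ q.2 ∨ (X ω).2 ≤ q.1}).toReal := by
  have h : (fun ω => if (X ω).1 ≤ q.2 ∨ (X ω).2 ≤ q.1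
        then HH φ (cl q.2, cl q.1) else 0)
      = ({ω | (X ω).1 ≤ q.2 ∨ (X ω).2 ≤ q.1}).indicator
          (fun _ => HH φ (cl q.2, cl q.1)) := by
    funext ω
    by_cases h : (X ω).1 ≤ q.2 ∨ (X ω).2 ≤ q.1 <;> simp [Set.indicator, h]
  have hms : MeasurableSet {ω | (X ω).1 ≤ q.2 ∨ (X ω).2 ≤ q.1} := by
    rw [Set.setOf_or]
    exact (measurableSet_le hX.fst measurable_const).union
      (measurableSet_le hX.snd measurable_const)
  rw [h, integral_indicator_const _ hms]
  simp [mul_comm, measureReal_def]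

lemma intJ1 :
    Integrable (fun s => D1 φ (cl s, 0) * (ℙ {ω | (X ω).1 ≤ s}).toReal) pm := by
  have h := ((swap1_integrable hUo hC hUs ℙ X hX).swap).integral_prod_left
  refine h.congr (ae_of_all _ fun s => ?_)
  exact inner1 ℙ X hX s

lemma intJ2 :
    Integrable (fun t => D2 φ (0, cl t) * (ℙ {ω | (X ω).2 ≤ t}).toReal) pm := by
  have h := ((swap2_integrable hUo hC hUs ℙ X hX).swap).integral_prod_left
  refine h.congr (ae_of_all _ fun t => ?_)
  exact inner2 ℙ X hX t

lemma intJ3 :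
    Integrable (fun q : ℝ × ℝ => HH φ (cl q.2, cl q.1)
      * (ℙ {ω | (X ω).1 ≤ q.2 ∨ (X ω).2 ≤ q.1}).toReal) (pm.prod pm) := by
  have h := ((swap3_integrable hUo hC hUs ℙ X hX).swap).integral_prod_left
  refine h.congr (ae_of_all _ fun q => ?_)
  exact inner3 ℙ X hX q

include hXr

lemma repr :
    ∫ ω, φ (X ω).1 (X ω).2 ∂ℙ
      = φ 1 1
        - ∫ s, D1 φ (cl s, 0) * (ℙ {ω | (X ω).1 ≤ s}).toReal ∂pm
        - ∫ t, D2 φ (0, cl t) * (ℙ {ω | (X ω).2 ≤ t}).toReal ∂pm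
        - ∫ q, HH φ (cl q.2, cl q.1)
            * (ℙ {ω | (X ω).1 ≤ q.2 ∨ (X ω).2 ≤ q.1}).toReal ∂(pm.prod pm) := by
  -- the clamped version of φ
  have hΦccont : Continuous (fun q : ℝ × ℝ => φ (cl q.1) (cl q.2)) := by
    have : (fun q : ℝ × ℝ => φ (cl q.1) (cl q.2))
        = (fun q : ℝ × ℝ => φ q.1 q.2) ∘ (fun q : ℝ × ℝ => (cl q.1, cl q.2)) := rfl
    rw [this]
    exact ContinuousOn.comp_continuous hC.continuousOn
      ((continuous_cl.comp continuous_fst).prodMk (continuous_cl.comp continuous_snd))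
      (fun q => hUs (mk_mem_prod (cl_mem _) (cl_mem _)))
  obtain ⟨Cφ, hCφ⟩ := bound_sq hUs hC.continuousOn
  have hΦcbd : ∀ q : ℝ × ℝ, |φ (cl q.1) (cl q.2)| ≤ Cφ := fun q =>
    hCφ _ (mk_mem_prod (cl_mem _) (cl_mem _))
  have hint_comp : ∀ (T : α → ℝ × ℝ), Measurable T →
      Integrable (fun ω => φ (cl (T ω).1) (cl (T ω).2)) ℙ := fun T hT =>
    integrable_of_bound ((hΦccont.measurable.comp hT)).aestronglyMeasurable
      Cφ (fun ω => hΦcbd _)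
  have e0 : Integrable (fun ω => φ (X ω).1 (X ω).2) ℙ := by
    refine (hint_comp X hX).congr (ae_of_all _ fun ω => ?_)
    show φ (cl (X ω).1) (cl (X ω).2) = φ (X ω).1 (X ω).2
    rw [cl_eq (hXr ω).1, cl_eq (hXr ω).2]
  have e1 : Integrable (fun ω => φ (X ω).1 0) ℙ := by
    refine (hint_comp (fun ω => ((X ω).1, (0:ℝ)))
      (hX.fst.prodMk measurable_const)).congr (ae_of_all _ fun ω => ?_)
    show φ (cl (X ω).1) (cl 0) = φ (X ω).1 0
    rw [cl_eq (hXr ω).1, cl_eq zmem]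
  have e2 : Integrable (fun ω => φ 0 (X ω).2) ℙ := by
    refine (hint_comp (fun ω => ((0:ℝ), (X ω).2))
      (measurable_const.prodMk hX.snd)).congr (ae_of_all _ fun ω => ?_)
    show φ (cl 0) (cl (X ω).2) = φ 0 (X ω).2
    rw [cl_eq (hXr ω).2, cl_eq zmem]
  have hi1 : ∀ ω, (∫ s, (if (X ω).1 ≤ s then D1 φ (cl s, 0) else 0) ∂pm)
      = φ 1 0 - φ (X ω).1 0 := fun ω => I1 hUo hC hUs (hXr ω).1
  have hi2 : ∀ ω, (∫ t, (if (X ω).2 ≤ t then D2 φ (0, cl t) else 0) ∂pm)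
      = φ 0 1 - φ 0 (X ω).2 := fun ω => I2 hUo hC hUs (hXr ω).2
  have hi3 : ∀ ω, (∫ q, (if (X ω).1 ≤ q.2 ∨ (X ω).2 ≤ q.1
        then HH φ (cl q.2, cl q.1) else 0) ∂(pm.prod pm))
      = φ 1 1 - φ (X ω).1 (X ω).2 + φ (X ω).1 0 - φ 1 0 - φ 0 1 + φ 0 (X ω).2 :=
    fun ω => I3 hUo hC hUs (hXr ω).1 (hXr ω).2
  have hint1 : Integrable
      (fun ω => ∫ s, (if (X ω).1 ≤ s then D1 φ (cl s, 0) else 0) ∂pm) ℙ := by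
    refine ((integrable_const (φ 1 0)).sub e1).congr (ae_of_all _ fun ω => ?_)
    exact (hi1 ω).symm
  have hint2 : Integrable
      (fun ω => ∫ t, (if (X ω).2 ≤ t then D2 φ (0, cl t) else 0) ∂pm) ℙ := by
    refine ((integrable_const (φ 0 1)).sub e2).congr (ae_of_all _ fun ω => ?_)
    exact (hi2 ω).symm
  have hint3 : Integrable
      (fun ω => ∫ q, (if (X ω).1 ≤ q.2 ∨ (X ω).2 ≤ q.1
        then HH φ (cl q.2, cl q.1) else 0) ∂(pm.prod pm)) ℙ := by
    have h5 : Integrable (fun ω => φ 1 1 - φ (X ω).1 (X ω).2 + φ (X ω).1 0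
        - φ 1 0 - φ 0 1 + φ 0 (X ω).2) ℙ :=
      (((((integrable_const (φ 1 1)).sub e0).add e1).sub
        (integrable_const (φ 1 0))).sub (integrable_const (φ 0 1))).add e2
    refine h5.congr (ae_of_all _ fun ω => ?_)
    exact (hi3 ω).symm
  have hswap1 : ∫ ω, (∫ s, (if (X ω).1 ≤ s then D1 φ (cl s, 0) else 0) ∂pm) ∂ℙ
      = ∫ s, D1 φ (cl s, 0) * (ℙ {ω | (X ω).1 ≤ s}).toReal ∂pm := by
    rw [integral_integral_swap (swap1_integrable hUo hC hUs ℙ X hX)]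
    exact integral_congr_ae (ae_of_all _ (inner1 ℙ X hX))
  have hswap2 : ∫ ω, (∫ t, (if (X ω).2 ≤ t then D2 φ (0, cl t) else 0) ∂pm) ∂ℙ
      = ∫ t, D2 φ (0, cl t) * (ℙ {ω | (X ω).2 ≤ t}).toReal ∂pm := by
    rw [integral_integral_swap (swap2_integrable hUo hC hUs ℙ X hX)]
    exact integral_congr_ae (ae_of_all _ (inner2 ℙ X hX))
  have hswap3 : ∫ ω, (∫ q, (if (X ω).1 ≤ q.2 ∨ (X ω).2 ≤ q.1
        then HH φ (cl q.2, cl q.1) else 0) ∂(pm.prod pm)) ∂ℙ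
      = ∫ q, HH φ (cl q.2, cl q.1)
          * (ℙ {ω | (X ω).1 ≤ q.2 ∨ (X ω).2 ≤ q.1}).toReal ∂(pm.prod pm) := by
    rw [integral_integral_swap (swap3_integrable hUo hC hUs ℙ X hX)]
    exact integral_congr_ae (ae_of_all _ (inner3 ℙ X hX))
  have hpt : ∀ ω, φ (X ω).1 (X ω).2
      = φ 1 1
        - (∫ s, (if (X ω).1 ≤ s then D1 φ (cl s, 0) else 0) ∂pm)
        - (∫ t, (if (X ω).2 ≤ t then D2 φ (0, cl t) else 0) ∂pm)
        - (∫ q, (if (X ω).1 ≤ q.2 ∨ (X ω).2 ≤ q.1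
            then HH φ (cl q.2, cl q.1) else 0) ∂(pm.prod pm)) := by
    intro ω
    rw [hi1 ω, hi2 ω, hi3 ω]
    ring
  have hA : Integrable (fun ω => φ 1 1
      - (∫ s, (if (X ω).1 ≤ s then D1 φ (cl s, 0) else 0) ∂pm)) ℙ :=
    (integrable_const _).sub hint1
  have hAB : Integrable (fun ω => φ 1 1
      - (∫ s, (if (X ω).1 ≤ s then D1 φ (cl s, 0) else 0) ∂pm)
      - (∫ t, (if (X ω).2 ≤ t then D2 φ (0, cl t) else 0) ∂pm)) ℙ := hA.sub hint2
  rw [integral_congr_ae (ae_of_all _ hpt),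
    integral_sub hAB hint3, integral_sub hA hint2,
    integral_sub (integrable_const (φ 1 1)) hint1,
    integral_const, hswap1, hswap2, hswap3]
  simp

end repr

lemma union_toReal {α : Type*} [MeasurableSpace α] (ℙ : Measure α)
    [IsFiniteMeasure ℙ] (X : α → ℝ × ℝ) (a b : ℝ) (hX : Measurable X) :
    (ℙ {ω | (X ω).1 ≤ a ∨ (X ω).2 ≤ b}).toReal
      = (ℙ {ω | (X ω).1 ≤ a}).toReal + (ℙ {ω | (X ω).2 ≤ b}).toReal
        - (ℙ {ω | (X ω).1 ≤ a ∧ (X ω).2 ≤ b}).toReal := by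
  have h := measure_union_add_inter (μ := ℙ) {ω | (X ω).1 ≤ a}
    (measurableSet_le hX.snd (measurable_const : Measurable fun _ : α => b))
  rw [← Set.setOf_or, ← Set.setOf_and] at h
  have h2 := congrArg ENNReal.toReal h
  rw [ENNReal.toReal_add (measure_ne_top _ _) (measure_ne_top _ _),
    ENNReal.toReal_add (measure_ne_top _ _) (measure_ne_top _ _)] at h2
  linarith

end SDaux

open SDaux

/-- **First order bivariate stochastic dominance over the supermodular class `Φ⁺`.**
`(X₁,Y₁)` and `(X₂,Y₂)` are random vectors with values in the unit square with
cdfs `F₁`, `F₂`, marginals `Fᵢ^X(x) = Fᵢ(x,1)`, `Fᵢ^Y(y) = Fᵢ(1,y)`, and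
associated functions `Kᵢ(s,t) = Fᵢ^X(s) + Fᵢ^Y(t) − Fᵢ(s,t)`.  If
`K₁ ≤ K₂`, `F₁^X ≤ F₂^X` and `F₁^Y ≤ F₂^Y` on the unit square, then
`E[φ(X₁,Y₁)] ≥ E[φ(X₂,Y₂)]` for every `φ : ℝ² → ℝ` that is `C²` on an open
connected set `Ω ⊇ [0,1]²`, increasing in each argument, and supermodular
(`∂²φ/∂x∂y ≥ 0` on `Ω`). -/
theorem first_order_bivariate_SD_supermodular
    {α : Type*} [MeasurableSpace α] (ℙ : Measure α) [IsProbabilityMeasure ℙ]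
    (V W : α → ℝ × ℝ) (hV : Measurable V) (hW : Measurable W)
    (hVr : ∀ ω, V ω ∈ Icc (0:ℝ) 1 ×ˢ Icc (0:ℝ) 1)
    (hWr : ∀ ω, W ω ∈ Icc (0:ℝ) 1 ×ˢ Icc (0:ℝ) 1)
    (F₁ F₂ : ℝ → ℝ → ℝ)
    (hF₁ : ∀ s t : ℝ, F₁ s t = (ℙ {ω | (V ω).1 ≤ s ∧ (V ω).2 ≤ t}).toReal)
    (hF₂ : ∀ s t : ℝ, F₂ s t = (ℙ {ω | (W ω).1 ≤ s ∧ (W ω).2 ≤ t}).toReal)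
    (K₁ K₂ : ℝ → ℝ → ℝ)
    (hK₁ : ∀ s t : ℝ, K₁ s t = F₁ s 1 + F₁ 1 t - F₁ s t)
    (hK₂ : ∀ s t : ℝ, K₂ s t = F₂ s 1 + F₂ 1 t - F₂ s t)
    (hdomK : ∀ s ∈ Icc (0:ℝ) 1, ∀ t ∈ Icc (0:ℝ) 1, K₁ s t ≤ K₂ s t)
    (hdomX : ∀ s ∈ Icc (0:ℝ) 1, F₁ s 1 ≤ F₂ s 1)
    (hdomY : ∀ t ∈ Icc (0:ℝ) 1, F₁ 1 t ≤ F₂ 1 t) :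
    ∀ φ : ℝ → ℝ → ℝ,
      (∃ U : Set (ℝ × ℝ), IsOpen U ∧ IsConnected U ∧
          Icc (0:ℝ) 1 ×ˢ Icc (0:ℝ) 1 ⊆ U ∧
          ContDiffOn ℝ 2 (fun q : ℝ × ℝ => φ q.1 q.2) U ∧
          -- supermodularity: ∂²φ/∂x∂y ≥ 0 on Ω
          (∀ q ∈ U, 0 ≤ deriv (fun x => deriv (fun y => φ x y) q.2) q.1)) →
      (∀ y : ℝ, Monotone fun x => φ x y) →
      (∀ x : ℝ, Monotone fun y => φ x y) →
      ∫ ω, φ (W ω).1 (W ω).2 ∂ℙ ≤ ∫ ω, φ (V ω).1 (V ω).2 ∂ℙ := by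
  rintro φ ⟨U, hUo, -, hUs, hC, hsm⟩ hmono1 hmono2
  -- identification of the marginal and joint cdfs
  have hVX : ∀ s : ℝ, (ℙ {ω | (V ω).1 ≤ s}).toReal = F₁ s 1 := by
    intro s
    rw [hF₁ s 1]
    have hset : {ω | (V ω).1 ≤ s ∧ (V ω).2 ≤ 1} = {ω | (V ω).1 ≤ s} := by
      ext ω
      simp only [mem_setOf_eq]
      exact ⟨fun h => h.1, fun h => ⟨h, (hVr ω).2.2⟩⟩
    rw [hset]
  have hVY : ∀ t : ℝ, (ℙ {ω | (V ω).2 ≤ t}).toReal = F₁ 1 t := by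
    intro t
    rw [hF₁ 1 t]
    have hset : {ω | (V ω).1 ≤ 1 ∧ (V ω).2 ≤ t} = {ω | (V ω).2 ≤ t} := by
      ext ω
      simp only [mem_setOf_eq]
      exact ⟨fun h => h.2, fun h => ⟨(hVr ω).1.2, h⟩⟩
    rw [hset]
  have hWX : ∀ s : ℝ, (ℙ {ω | (W ω).1 ≤ s}).toReal = F₂ s 1 := by
    intro s
    rw [hF₂ s 1]
    have hset : {ω | (W ω).1 ≤ s ∧ (W ω).2 ≤ 1} = {ω | (W ω).1 ≤ s} := by
      ext ω
      simp only [mem_setOf_eq]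
      exact ⟨fun h => h.1, fun h => ⟨h, (hWr ω).2.2⟩⟩
    rw [hset]
  have hWY : ∀ t : ℝ, (ℙ {ω | (W ω).2 ≤ t}).toReal = F₂ 1 t := by
    intro t
    rw [hF₂ 1 t]
    have hset : {ω | (W ω).1 ≤ 1 ∧ (W ω).2 ≤ t} = {ω | (W ω).2 ≤ t} := by
      ext ω
      simp only [mem_setOf_eq]
      exact ⟨fun h => h.2, fun h => ⟨(hWr ω).1.2, h⟩⟩
    rw [hset]
  have hVU : ∀ a b : ℝ, (ℙ {ω | (V ω).1 ≤ a ∨ (V ω).2 ≤ b}).toReal = K₁ a b := by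
    intro a b
    rw [union_toReal ℙ V a b hV, hVX, hVY, ← hF₁ a b, hK₁]
  have hWU : ∀ a b : ℝ, (ℙ {ω | (W ω).1 ≤ a ∨ (W ω).2 ≤ b}).toReal = K₂ a b := by
    intro a b
    rw [union_toReal ℙ W a b hW, hWX, hWY, ← hF₂ a b, hK₂]
  -- a.e. membership facts
  have haepm : ∀ᵐ s ∂pm, s ∈ Icc (0:ℝ) 1 := by
    rw [show pm = volume.restrict (Icc (0:ℝ) 1) from rfl]
    exact ae_restrict_mem measurableSet_Icc
  have haepm2 : ∀ᵐ q ∂(pm.prod pm), q ∈ Icc (0:ℝ) 1 ×ˢ Icc (0:ℝ) 1 := by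
    rw [show pm = volume.restrict (Icc (0:ℝ) 1) from rfl, Measure.prod_restrict]
    exact ae_restrict_mem (measurableSet_Icc.prod measurableSet_Icc)
  -- the three comparisons
  have h1 : ∫ s, D1 φ (cl s, 0) * (ℙ {ω | (V ω).1 ≤ s}).toReal ∂pm
      ≤ ∫ s, D1 φ (cl s, 0) * (ℙ {ω | (W ω).1 ≤ s}).toReal ∂pm := by
    refine integral_mono_ae (intJ1 hUo hC hUs ℙ V hV) (intJ1 hUo hC hUs ℙ W hW) ?_
    filter_upwards [haepm] with s hs
    have hd : 0 ≤ D1 φ (cl s, 0) := by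
      rw [cl_eq hs]
      exact mono_hasDerivAt_nonneg (hmono1 0)
        (hasDerivAt_D1 hUo hC (mem_U hUs hs zmem))
    rw [hVX, hWX]
    exact mul_le_mul_of_nonneg_left (hdomX s hs) hd
  have h2 : ∫ t, D2 φ (0, cl t) * (ℙ {ω | (V ω).2 ≤ t}).toReal ∂pm
      ≤ ∫ t, D2 φ (0, cl t) * (ℙ {ω | (W ω).2 ≤ t}).toReal ∂pm := by
    refine integral_mono_ae (intJ2 hUo hC hUs ℙ V hV) (intJ2 hUo hC hUs ℙ W hW) ?_
    filter_upwards [haepm] with t ht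
    have hd : 0 ≤ D2 φ (0, cl t) := by
      rw [cl_eq ht]
      exact mono_hasDerivAt_nonneg (hmono2 0)
        (hasDerivAt_D2 hUo hC (mem_U hUs zmem ht))
    rw [hVY, hWY]
    exact mul_le_mul_of_nonneg_left (hdomY t ht) hd
  have h3 : ∫ q, HH φ (cl q.2, cl q.1)
        * (ℙ {ω | (V ω).1 ≤ q.2 ∨ (V ω).2 ≤ q.1}).toReal ∂(pm.prod pm)
      ≤ ∫ q, HH φ (cl q.2, cl q.1)
        * (ℙ {ω | (W ω).1 ≤ q.2 ∨ (W ω).2 ≤ q.1}).toReal ∂(pm.prod pm) := by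
    refine integral_mono_ae (intJ3 hUo hC hUs ℙ V hV) (intJ3 hUo hC hUs ℙ W hW) ?_
    filter_upwards [haepm2] with q hq
    have hs : q.2 ∈ Icc (0:ℝ) 1 := hq.2
    have ht : q.1 ∈ Icc (0:ℝ) 1 := hq.1
    have hd : 0 ≤ HH φ (cl q.2, cl q.1) := by
      rw [cl_eq hs, cl_eq ht]
      rw [HH_eq_deriv hUo hC (mem_U hUs hs ht)]
      exact hsm (q.2, q.1) (mem_U hUs hs ht)
    rw [hVU, hWU]
    exact mul_le_mul_of_nonneg_left (hdomK q.2 hs q.1 ht) hd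
  rw [repr hUo hC hUs ℙ V hV hVr, repr hUo hC hUs ℙ W hW hWr]
  linarith
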